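/- Let d ≥ 1, K_0 > 0, K_4 > 0 and δ ∈ (0, 1/5). Let F : ℝ^d × S^d → ℝ satisfy degenerate ellipticity (Γ ≥ Γ′ implies F(p,Γ) ≤ F(p,Γ′)) and the Lipschitz bound |F(p,Γ) − F(p′,Γ′)| ≤ K_0(|p − p′| + ‖Γ − Γ′‖). Then there exist κ > 0, β > 0, C > 0 and h′ ∈ (0,1] such that for all h ∈ (0, h′] and all p_0, p ∈ ℝ^d, Γ_0, Γ ∈ S^d with |p_0|, |p| ≤ K_4 h^{−δ} and ‖Γ_0‖, ‖Γ‖ ≤ K_4 h^{−δ}, one has inf_{w ∈ ℝ^d, |w| ≤ h^{−κ}} [ √h (p_0 − p)ᵀw + (h/2) wᵀ(Γ_0 − Γ)w − h F(p,Γ) ] ≤ −h F(p_0, Γ_0) + C h^{1+β}. -/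

import Mathlib

noncomputable section

/-- Euclidean space `ℝ^d`. -/
abbrev Ed (d : ℕ) := EuclideanSpace ℝ (Fin d)

/-- The `ℓ²`-operator norm of a matrix. -/
def opN {d : ℕ} (Γ : Matrix (Fin d) (Fin d) ℝ) : ℝ :=
  ‖Matrix.toEuclideanCLM (𝕜 := ℝ) Γ‖

/-- Euclidean inner product `pᵀ w`. -/
def dotp {d : ℕ} (p w : Ed d) : ℝ := ∑ i, p i * w i

/-- Quadratic form `wᵀ Γ w`. -/
def quadForm {d : ℕ} (Γ : Matrix (Fin d) (Fin d) ℝ) (w : Ed d) : ℝ :=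
  ∑ i, ∑ j, w i * Γ i j * w j

/-- The Hessian matrix `D²φ(x)`. -/
def hess {d : ℕ} (φ : Ed d → ℝ) (x : Ed d) : Matrix (Fin d) (Fin d) ℝ :=
  Matrix.of fun i j =>
    iteratedFDeriv ℝ 2 φ x ![EuclideanSpace.single i 1, EuclideanSpace.single j 1]

/-- First-order partial derivative in direction `i`. -/
def pDeriv {d : ℕ} (i : Fin d) (φ : Ed d → ℝ) : Ed d → ℝ :=
  fun x => fderiv ℝ φ x (EuclideanSpace.single i 1)

/-- The multiindex partial derivative `D^α φ`. -/
def mDeriv {d : ℕ} (α : Fin d → ℕ) (φ : Ed d → ℝ) : Ed d → ℝ :=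
  (((List.finRange d).flatMap fun i => List.replicate (α i) i).foldr pDeriv φ)

/-- The finite set of multiindices `α` with `|α|₁ ≤ k`. -/
def multiIdx (d k : ℕ) : Finset (Fin d → ℕ) :=
  (Fintype.piFinset fun _ : Fin d => Finset.range (k + 1)).filter fun α => ∑ i, α i ≤ k

/-- `D_{h,δ} = {(p,Γ) ∈ ℝ^d × S^d : |p| ≤ K₄ h^{-δ}, ‖Γ‖ ≤ K₄ h^{-δ}}`. -/
def Dset (d : ℕ) (K4 h δ : ℝ) : Set (Ed d × Matrix (Fin d) (Fin d) ℝ) :=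
  {pΓ | pΓ.2.IsSymm ∧ ‖pΓ.1‖ ≤ K4 * h ^ (-δ) ∧ opN pΓ.2 ≤ K4 * h ^ (-δ)}

/-- `X_{h,κ} = {w ∈ ℝ^d : |w| ≤ h^{-κ}}`. -/
def Xset (d : ℕ) (h κ : ℝ) : Set (Ed d) := {w | ‖w‖ ≤ h ^ (-κ)}

end

open scoped RealInnerProductSpace
open Matrix
set_option synthInstance.maxHeartbeats 1000000
set_option maxHeartbeats 1000000

namespace Stmt5Aux
variable {d : ℕ}

lemma dotp_eq (p w : Ed d) : dotp p w = ⟪p, w⟫ := by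
  simp [dotp, PiLp.inner_apply, mul_comm]

lemma quadForm_eq (M : Matrix (Fin d) (Fin d) ℝ) (w : Ed d) :
    quadForm M w = ⟪w, (Matrix.toEuclideanCLM (𝕜 := ℝ) M) w⟫ := by
  have h : ∀ i, (Matrix.toEuclideanCLM (𝕜 := ℝ) M) w i = ∑ j, M i j * w j := fun i => rfl
  simp only [quadForm, PiLp.inner_apply, h, RCLike.inner_apply, conj_trivial]
  congr 1; ext i; rw [Finset.sum_mul]; congr 1; ext j; ring

lemma abs_quadForm_le (M : Matrix (Fin d) (Fin d) ℝ) (w : Ed d) :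
    |quadForm M w| ≤ opN M * ‖w‖ ^ 2 := by
  rw [quadForm_eq]
  calc |⟪w, (Matrix.toEuclideanCLM (𝕜 := ℝ) M) w⟫|
      ≤ ‖w‖ * ‖(Matrix.toEuclideanCLM (𝕜 := ℝ) M) w‖ := abs_real_inner_le_norm _ _
    _ ≤ ‖w‖ * (opN M * ‖w‖) := by
        gcongr; exact (Matrix.toEuclideanCLM (𝕜 := ℝ) M).le_opNorm w
    _ = opN M * ‖w‖ ^ 2 := by ring

lemma quadForm_smul (M : Matrix (Fin d) (Fin d) ℝ) (c : ℝ) (w : Ed d) :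
    quadForm M (c • w) = c ^ 2 * quadForm M w := by
  rw [quadForm_eq, quadForm_eq, _root_.map_smul, real_inner_smul_left, real_inner_smul_right]
  ring

lemma quadForm_zero (M : Matrix (Fin d) (Fin d) ℝ) : quadForm M (0 : Ed d) = 0 := by
  simp [quadForm]

lemma dotp_zero (p : Ed d) : dotp p (0 : Ed d) = 0 := by simp [dotp]

lemma opN_nonneg (M : Matrix (Fin d) (Fin d) ℝ) : 0 ≤ opN M := norm_nonneg _

lemma opN_sub_le (A B : Matrix (Fin d) (Fin d) ℝ) : opN (A - B) ≤ opN A + opN B := by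
  unfold opN; rw [map_sub]; exact norm_sub_le _ _

lemma opN_smul_one (hd : 1 ≤ d) (r : ℝ) : opN (r • (1 : Matrix (Fin d) (Fin d) ℝ)) = |r| := by
  haveI : Nontrivial (Ed d) := by
    refine nontrivial_of_ne (EuclideanSpace.single ⟨0, hd⟩ (1 : ℝ)) 0 fun h => ?_
    have := congrArg norm h
    rw [EuclideanSpace.norm_single, norm_zero] at this
    simpa using this
  unfold opN
  rw [_root_.map_smul, _root_.map_one]
  have h1 : ‖(1 : Ed d →L[ℝ] Ed d)‖ = 1 := by
    rw [ContinuousLinearMap.one_def, ContinuousLinearMap.norm_id]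
  rw [norm_smul r (1 : Ed d →L[ℝ] Ed d), h1, mul_one, Real.norm_eq_abs]

lemma psd_add (M : Matrix (Fin d) (Fin d) ℝ) (hM : M.IsSymm) (lam : ℝ)
    (hlow : ∀ y : Ed d, -lam * ‖y‖ ^ 2 ≤ quadForm M y) :
    (M + lam • 1).PosSemidef := by
  rw [Matrix.posSemidef_iff_dotProduct_mulVec]
  constructor
  · rw [Matrix.IsHermitian, Matrix.conjTranspose_eq_transpose_of_trivial]
    exact (hM.add (Matrix.isSymm_one.smul lam)).eq
  · intro x
    set w : Ed d := (WithLp.equiv 2 _).symm x with hw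
    have h1 : dotProduct (star x) (M *ᵥ x) = quadForm M w := by
      simp only [star_trivial, dotProduct, Matrix.mulVec, quadForm]
      congr 1; ext i; rw [Finset.mul_sum]; congr 1; ext j
      simp [dotProduct, hw]; ring
    have h2 : dotProduct (star x) ((lam • (1 : Matrix (Fin d) (Fin d) ℝ)) *ᵥ x)
        = lam * ‖w‖ ^ 2 := by
      have hn : ‖w‖ ^ 2 = ∑ i, x i * x i := by
        rw [EuclideanSpace.norm_eq, Real.sq_sqrt (by positivity)]
        congr 1; ext i; rw [Real.norm_eq_abs, sq_abs]; simp [hw]; ring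
      simp only [star_trivial, Matrix.smul_mulVec, Matrix.one_mulVec,
        dotProduct_smul, smul_eq_mul, hn, dotProduct]
      rw [Finset.mul_sum]; congr 1; ext i; simp [Pi.smul_apply]; ring
    rw [Matrix.add_mulVec, dotProduct_add, h1, h2]
    have := hlow w
    nlinarith [this]

end Stmt5Aux

/-- The key inf inequality behind the consistency of the max–min
representation (part of the proof of Lemma 3.10). -/
theorem stmt5 (d : ℕ) (hd : 1 ≤ d) (K0 K4 δ : ℝ) (hK0 : 0 < K0) (hK4 : 0 < K4)
    (hδ : δ ∈ Set.Ioo (0 : ℝ) (1 / 5))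
    (F : Ed d → Matrix (Fin d) (Fin d) ℝ → ℝ)
    (hell : ∀ (p : Ed d) (Γ Γ' : Matrix (Fin d) (Fin d) ℝ), Γ.IsSymm → Γ'.IsSymm →
      (Γ - Γ').PosSemidef → F p Γ ≤ F p Γ')
    (hlip : ∀ (p p' : Ed d) (Γ Γ' : Matrix (Fin d) (Fin d) ℝ), Γ.IsSymm → Γ'.IsSymm →
      |F p Γ - F p' Γ'| ≤ K0 * (‖p - p'‖ + opN (Γ - Γ'))) :
    ∃ κ > (0 : ℝ), ∃ β > (0 : ℝ), ∃ C > (0 : ℝ), ∃ h' ∈ Set.Ioc (0 : ℝ) 1,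
      ∀ h ∈ Set.Ioc (0 : ℝ) h', ∀ p₀ p : Ed d, ∀ Γ₀ Γ : Matrix (Fin d) (Fin d) ℝ,
        Γ₀.IsSymm → Γ.IsSymm →
        ‖p₀‖ ≤ K4 * h ^ (-δ) → ‖p‖ ≤ K4 * h ^ (-δ) →
        opN Γ₀ ≤ K4 * h ^ (-δ) → opN Γ ≤ K4 * h ^ (-δ) →
        sInf {u | ∃ w : Ed d, ‖w‖ ≤ h ^ (-κ) ∧ u =
            Real.sqrt h * dotp (p₀ - p) w + (h / 2) * quadForm (Γ₀ - Γ) w - h * F p Γ}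
          ≤ -h * F p₀ Γ₀ + C * h ^ (1 + β) := by
  obtain ⟨hδ0, hδ5⟩ := hδ
  have hβpos : (0:ℝ) < 1 - δ := by linarith
  have hCpos : (0:ℝ) < 8*K0^2*K4 + 1 := by positivity
  have hmpos : (0:ℝ) < min 1 (1/(32*K0+1)) := lt_min one_pos (by positivity)
  refine ⟨1/2, one_half_pos, 1 - δ, hβpos, 8*K0^2*K4 + 1, hCpos,
    min 1 (1/(32*K0+1)), ⟨⟨hmpos, min_le_left _ _⟩, ?_⟩⟩
  rintro h ⟨hh0, hh'⟩ p₀ p Γ₀ Γ hΓ₀ hΓ hp₀ hp hoΓ₀ hoΓ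
  set q := p₀ - p with hqdef
  set M := Γ₀ - Γ with hMdef
  have hMsymm : M.IsSymm := hΓ₀.sub hΓ
  have hh1 : h ≤ 1 := le_trans hh' (min_le_left _ _)
  have h32 : 32 * K0 * h ≤ 1 := by
    have h2 := le_trans hh' (min_le_right _ _)
    rw [le_div_iff₀ (by positivity)] at h2
    linarith
  set r := Real.sqrt h with hrdef
  have hr0 : 0 < r := Real.sqrt_pos.mpr hh0
  have hrr : r * r = h := Real.mul_self_sqrt hh0.le
  have hpow : h ^ (-(1/2) : ℝ) = r⁻¹ := by
    rw [Real.rpow_neg hh0.le, hrdef, Real.sqrt_eq_rpow]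
  -- operator norm bound
  set b := opN M with hbdef
  have hb0 : 0 ≤ b := Stmt5Aux.opN_nonneg M
  have hb : b ≤ 2 * (K4 * h ^ (-δ)) := by
    have := Stmt5Aux.opN_sub_le Γ₀ Γ
    rw [← hMdef] at this
    linarith
  -- minimum of quadForm on the unit sphere
  haveI : Nontrivial (Ed d) := by
    refine nontrivial_of_ne (EuclideanSpace.single ⟨0, hd⟩ (1 : ℝ)) 0 fun hcon => ?_
    have := congrArg norm hcon
    rw [EuclideanSpace.norm_single, norm_zero] at this
    simp at this
  have hcont : Continuous fun w : Ed d => quadForm M w := by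
    have he : (fun w : Ed d => quadForm M w)
        = fun w => ⟪w, (Matrix.toEuclideanCLM (𝕜 := ℝ) M) w⟫ :=
      funext (Stmt5Aux.quadForm_eq M)
    rw [he]
    exact continuous_id.inner (Matrix.toEuclideanCLM (𝕜 := ℝ) M).continuous
  obtain ⟨v₀, hv₀S, hv₀min⟩ := (isCompact_sphere (0 : Ed d) 1).exists_isMinOn
    (NormedSpace.sphere_nonempty.mpr zero_le_one) hcont.continuousOn
  have hv₀ : ‖v₀‖ = 1 := by rwa [mem_sphere_zero_iff_norm] at hv₀S
  set μ := quadForm M v₀ with hμdef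
  set lam := max 0 (-μ) with hlamdef
  have hlam0 : 0 ≤ lam := le_max_left _ _
  have hμlam : -lam ≤ μ := by
    have := le_max_right 0 (-μ); linarith
  have hmin : ∀ y : Ed d, ‖y‖ = 1 → μ ≤ quadForm M y := by
    intro y hy
    exact hv₀min (by rwa [mem_sphere_zero_iff_norm])
  have hlow : ∀ y : Ed d, -lam * ‖y‖ ^ 2 ≤ quadForm M y := by
    intro y
    rcases eq_or_ne y 0 with rfl | hy
    · simp [Stmt5Aux.quadForm_zero]
    · have hyn : 0 < ‖y‖ := norm_pos_iff.mpr hy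
      have h1 : ‖(‖y‖⁻¹ • y : Ed d)‖ = 1 := by
        rw [norm_smul, Real.norm_eq_abs, abs_inv, abs_of_pos hyn, inv_mul_cancel₀ hyn.ne']
      have h2 := hmin _ h1
      rw [Stmt5Aux.quadForm_smul] at h2
      have h4 := mul_le_mul_of_nonneg_left h2 (sq_nonneg ‖y‖)
      have h5 : ‖y‖ ^ 2 * ((‖y‖⁻¹) ^ 2 * quadForm M y) = quadForm M y := by
        field_simp
      have h6 := mul_le_mul_of_nonneg_left hμlam (sq_nonneg ‖y‖)
      rw [h5] at h4
      nlinarith [h4, h6]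
  have hpsd : (M + lam • 1).PosSemidef := Stmt5Aux.psd_add M hMsymm lam hlow
  -- F bound
  have hsymm' : (Γ - lam • 1).IsSymm := hΓ.sub (Matrix.isSymm_one.smul lam)
  have hF1 : F p₀ Γ₀ ≤ F p₀ (Γ - lam • 1) := by
    refine hell p₀ Γ₀ (Γ - lam • 1) hΓ₀ hsymm' ?_
    have he : Γ₀ - (Γ - lam • 1) = M + lam • 1 := by rw [hMdef]; abel
    rwa [he]
  have hF2 := hlip p₀ p (Γ - lam • 1) Γ hsymm' hΓ
  have hopn : opN ((Γ - lam • 1) - Γ) = lam := by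
    have he : (Γ - lam • 1) - Γ = (-lam) • (1 : Matrix (Fin d) (Fin d) ℝ) := by
      rw [neg_smul]; abel
    rw [he, Stmt5Aux.opN_smul_one hd, abs_neg, abs_of_nonneg hlam0]
  rw [hopn] at hF2
  have hF : F p₀ Γ₀ ≤ F p Γ + K0 * (‖q‖ + lam) := by
    have := abs_le.mp hF2
    have hq' : ‖p₀ - p‖ = ‖q‖ := rfl
    rw [hq'] at this
    linarith [this.2, hF1]
  -- Claim 1
  have claim1 : ∃ w₁ : Ed d, ‖w₁‖ ≤ h ^ (-(1/2) : ℝ) ∧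
      Real.sqrt h * dotp q w₁ + (h/2) * quadForm M w₁
        ≤ -(4*K0*h) * ‖q‖ + 8*K0^2*h^2*b := by
    rcases eq_or_ne q 0 with hq0 | hq0
    · refine ⟨0, by rw [norm_zero]; positivity, ?_⟩
      rw [Stmt5Aux.dotp_zero, Stmt5Aux.quadForm_zero, hq0, norm_zero]
      have := mul_nonneg (by positivity : (0:ℝ) ≤ 8*K0^2*h^2) hb0
      linarith
    · set a := ‖q‖ with hadef
      have ha : 0 < a := norm_pos_iff.mpr hq0
      set u : Ed d := a⁻¹ • q with hudef
      have hu : ‖u‖ = 1 := by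
        rw [hudef, norm_smul, Real.norm_eq_abs, abs_inv, abs_of_pos ha, ← hadef,
          inv_mul_cancel₀ ha.ne']
      have hqu : ⟪q, u⟫ = a := by
        rw [hudef, real_inner_smul_right, real_inner_self_eq_norm_mul_norm, ← hadef]
        field_simp
      set s : ℝ := -(4*K0*r) with hsdef
      refine ⟨s • u, ?_, ?_⟩
      · rw [norm_smul, Real.norm_eq_abs, hu, mul_one, hsdef, abs_neg,
          abs_of_nonneg (by positivity), hpow]
        have key : (4*K0*r) * r ≤ r⁻¹ * r := by
          rw [inv_mul_cancel₀ hr0.ne']; nlinarith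
        exact le_of_mul_le_mul_right key hr0
      · have e1 : Real.sqrt h * dotp q (s • u) = -(4*K0*h) * a := by
          rw [Stmt5Aux.dotp_eq, real_inner_smul_right, hqu, ← hrdef, hsdef]
          linear_combination (-(4*K0*a)) * hrr
        have e2 : quadForm M (s • u) = s^2 * quadForm M u := Stmt5Aux.quadForm_smul M s u
        have e3 : s^2 = 16*K0^2*h := by rw [hsdef]; nlinarith
        have e4 : quadForm M u ≤ b := by
          have := (abs_le.mp (Stmt5Aux.abs_quadForm_le M u)).2
          rw [hu] at this; simpa using this
        rw [e1, e2, e3]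
        have := mul_le_mul_of_nonneg_left e4 (by positivity : (0:ℝ) ≤ 8*K0^2*h^2)
        nlinarith [this]
  -- Claim 2
  have claim2 : ∃ w₂ : Ed d, ‖w₂‖ ≤ h ^ (-(1/2) : ℝ) ∧
      Real.sqrt h * dotp q w₂ + (h/2) * quadForm M w₂ ≤ -(lam/8) := by
    rcases le_or_gt 0 μ with hμ0 | hμ0
    · have : lam = 0 := by rw [hlamdef, max_eq_left (by linarith)]
      exact ⟨0, by rw [norm_zero]; positivity,
        by rw [Stmt5Aux.dotp_zero, Stmt5Aux.quadForm_zero, this]; norm_num⟩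
    · have hlameq : lam = -μ := by rw [hlamdef, max_eq_right (by linarith)]
      set v : Ed d := if dotp q v₀ ≤ 0 then v₀ else -v₀ with hvdef
      have hvn : ‖v‖ = 1 := by
        rw [hvdef]; split_ifs <;> simp [hv₀]
      have hqv : dotp q v ≤ 0 := by
        rw [hvdef]; split_ifs with hc
        · exact hc
        · push_neg at hc
          rw [Stmt5Aux.dotp_eq, inner_neg_right, ← Stmt5Aux.dotp_eq]
          linarith
      have hqfv : quadForm M v = μ := by
        rw [hvdef]; split_ifs
        · rfl
        · have : (-v₀ : Ed d) = (-1 : ℝ) • v₀ := by simp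
          rw [this, Stmt5Aux.quadForm_smul]; norm_num [hμdef]
      set t : ℝ := r⁻¹ / 2 with htdef
      have ht0 : 0 < t := by positivity
      refine ⟨t • v, ?_, ?_⟩
      · rw [norm_smul, Real.norm_eq_abs, hvn, mul_one, abs_of_pos ht0, hpow, htdef]
        linarith [inv_pos.mpr hr0]
      · have e1 : Real.sqrt h * dotp q (t • v) ≤ 0 := by
          rw [Stmt5Aux.dotp_eq, real_inner_smul_right, ← Stmt5Aux.dotp_eq, ← hrdef]
          have : t * dotp q v ≤ 0 := mul_nonpos_of_nonneg_of_nonpos ht0.le hqv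
          exact mul_nonpos_of_nonneg_of_nonpos hr0.le this
        have e2 : (h/2) * quadForm M (t • v) = μ / 8 := by
          rw [Stmt5Aux.quadForm_smul, hqfv, htdef, ← hrr]
          field_simp
          ring
        rw [hlameq]
        linarith [e1, e2.le, e2.ge]
  obtain ⟨w₁, hw₁, hg₁⟩ := claim1
  obtain ⟨w₂, hw₂, hg₂⟩ := claim2
  set S : Set ℝ := {u | ∃ w : Ed d, ‖w‖ ≤ h ^ (-(1/2) : ℝ) ∧ u =
      Real.sqrt h * dotp q w + (h / 2) * quadForm M w - h * F p Γ} with hSdef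
  have hbdd : BddBelow S := by
    refine ⟨-(r * (‖q‖ * r⁻¹) + (h/2) * (b * (r⁻¹)^2) + |h * F p Γ|), ?_⟩
    rintro u ⟨w, hw, rfl⟩
    rw [hpow] at hw
    have h1' : |dotp q w| ≤ ‖q‖ * ‖w‖ := by
      rw [Stmt5Aux.dotp_eq]; exact abs_real_inner_le_norm q w
    have h1 := abs_le.mp h1'
    have h2 := abs_le.mp (Stmt5Aux.abs_quadForm_le M w)
    have hwn : 0 ≤ ‖w‖ := norm_nonneg w
    have hsq : ‖w‖^2 ≤ (r⁻¹)^2 := pow_le_pow_left₀ hwn hw 2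
    have d1 : -(‖q‖ * r⁻¹) ≤ dotp q w := by
      linarith only [h1.1, mul_le_mul_of_nonneg_left hw (norm_nonneg q)]
    have d2 : -(b * (r⁻¹)^2) ≤ quadForm M w := by
      linarith only [h2.1, mul_le_mul_of_nonneg_left hsq hb0]
    have m1 := mul_le_mul_of_nonneg_left d1 hr0.le
    have m2 := mul_le_mul_of_nonneg_left d2 (by positivity : (0:ℝ) ≤ h/2)
    have m3 := le_abs_self (h * F p Γ)
    rw [← hrdef]
    linarith only [m1, m2, m3]
  have hmem₁ : (Real.sqrt h * dotp q w₁ + (h / 2) * quadForm M w₁ - h * F p Γ) ∈ S :=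
    ⟨w₁, hw₁, rfl⟩
  have hmem₂ : (Real.sqrt h * dotp q w₂ + (h / 2) * quadForm M w₂ - h * F p Γ) ∈ S :=
    ⟨w₂, hw₂, rfl⟩
  have hi1 := csInf_le hbdd hmem₁
  have hi2 := csInf_le hbdd hmem₂
  -- final arithmetic
  have hq0 : 0 ≤ ‖q‖ := norm_nonneg q
  have hrp : (0:ℝ) < h ^ ((2:ℝ) - δ) := Real.rpow_pos_of_pos hh0 _
  have hhb : h^2 * h^(-δ) = h^((2:ℝ) - δ) := by
    rw [show ((2:ℝ) - δ) = ((2:ℕ):ℝ) + (-δ) by push_cast; ring,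
      Real.rpow_add hh0, Real.rpow_natCast]
  have hbb : 8*K0^2*h^2*b ≤ 16*K0^2*K4 * h^((2:ℝ)-δ) := by
    have h7 := mul_le_mul_of_nonneg_left hb (by positivity : (0:ℝ) ≤ 8*K0^2*h^2)
    have h8 : 8*K0^2*h^2*(2*(K4*h^(-δ))) = 16*K0^2*K4*h^((2:ℝ)-δ) := by
      rw [← hhb]; ring
    linarith
  have hlam8 : -(lam/8) ≤ -(4*K0*h)*lam := by nlinarith
  have hFh : h * F p₀ Γ₀ ≤ h * F p Γ + K0*h*‖q‖ + K0*h*lam := by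
    have h9 := mul_le_mul_of_nonneg_left hF hh0.le
    linarith only [h9]
  have hexp : h ^ ((1:ℝ) + (1 - δ)) = h ^ ((2:ℝ) - δ) := by
    congr 1; ring
  rw [hexp]
  linarith only [hi1, hi2, hg₁, hg₂, hlam8, hbb, hFh, hrp,
    mul_nonneg (mul_nonneg hK0.le hh0.le) hq0,
    mul_nonneg (mul_nonneg hK0.le hh0.le) hlam0]
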